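/- Let t ≥ 4, m = t−2, n = 6m+1, and let G be the circulant graph on ℤ/nℤ with distance set {m} ∪ [2m+1, 3m]. Then G contains no clique of size 4. -/

import Mathlib

/-- The cyclic distance ‖x‖ = min(x mod n, n − (x mod n)) for x ∈ ℤ/nℤ. -/
def cyclicDist (n : ℕ) (x : ZMod n) : ℕ := min x.val (n - x.val)

/-- The circulant graph on `ZMod n` with distance set `S`: `x ~ y` iff `‖x - y‖ ∈ S`. -/
def circ (n : ℕ) (S : Set ℕ) : SimpleGraph (ZMod n) :=
  SimpleGraph.fromRel (fun x y => cyclicDist n (x - y) ∈ S)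

/-- `G` is `R(s,t)`-good: no clique of size `s` and no independent set of size `t`. -/
def RGood {V : Type*} (s t : ℕ) (G : SimpleGraph V) : Prop :=
  G.CliqueFree s ∧ Gᶜ.CliqueFree t

/-- `G` is doubly saturated `R(s,t)`-good. -/
def DoublySaturated {V : Type*} (s t : ℕ) (G : SimpleGraph V) : Prop :=
  RGood s t G ∧
  (∀ u v : V, u ≠ v → ¬ G.Adj u v → ¬ (G ⊔ SimpleGraph.edge u v).CliqueFree s) ∧
  (∀ u v : V, G.Adj u v → ¬ ((G.deleteEdges {s(u, v)})ᶜ.CliqueFree t)) ∧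
  G ≠ ⊤ ∧ Gᶜ ≠ ⊤

lemma modred2 (a n : ℕ) (h0 : 0 < n) (h : a < 2 * n) : a % n = a ∨ (n ≤ a ∧ a % n = a - n) := by
  rcases Nat.lt_or_ge a n with h1 | h1
  · exact Or.inl (Nat.mod_eq_of_lt h1)
  · right
    refine ⟨h1, ?_⟩
    rw [Nat.mod_eq_sub_mod h1, Nat.mod_eq_of_lt (by omega)]

lemma modred3 (a n : ℕ) (h0 : 0 < n) (h : a < 3 * n) :
    a % n = a ∨ (n ≤ a ∧ a % n = a - n) ∨ (2 * n ≤ a ∧ a % n = a - 2 * n) := by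
  rcases Nat.lt_or_ge a n with h1 | h1
  · exact Or.inl (Nat.mod_eq_of_lt h1)
  · rcases Nat.lt_or_ge a (2 * n) with h2 | h2
    · refine Or.inr (Or.inl ⟨h1, ?_⟩)
      rw [Nat.mod_eq_sub_mod h1, Nat.mod_eq_of_lt (by omega)]
    · refine Or.inr (Or.inr ⟨h2, ?_⟩)
      rw [Nat.mod_eq_sub_mod h1, Nat.mod_eq_sub_mod (by omega), Nat.mod_eq_of_lt (by omega)]
      omega

theorem stmt_1 (t m n : ℕ) (ht : 4 ≤ t) (hm : m = t - 2) (hn : n = 6 * m + 1) :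
    (circ n ({m} ∪ Set.Icc (2 * m + 1) (3 * m))).CliqueFree 4 := by
  have hm2 : 2 ≤ m := by omega
  have hn0 : 0 < n := by omega
  haveI : NeZero n := ⟨by omega⟩
  rw [SimpleGraph.cliqueFree_iff]
  constructor
  intro f
  -- key property of adjacent pairs
  have key : ∀ x y : ZMod n,
      (circ n ({m} ∪ Set.Icc (2 * m + 1) (3 * m))).Adj x y →
      (1 ≤ (x - y).val ∧ (x - y).val < n ∧
        ((x - y).val = m ∨ (x - y).val = 5 * m + 1 ∨
          (2 * m + 1 ≤ (x - y).val ∧ (x - y).val ≤ 4 * m))) := by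
    intro x y hxy
    rw [circ, SimpleGraph.fromRel_adj] at hxy
    obtain ⟨hne, hor⟩ := hxy
    have hsub : x - y ≠ 0 := sub_ne_zero.mpr hne
    have hv0 : (x - y).val ≠ 0 := fun h => hsub (by
      have := (ZMod.val_eq_zero (x - y)).mp h; exact this)
    have hvlt : (x - y).val < n := ZMod.val_lt _
    have hyx : y - x = -(x - y) := by ring
    have hyxval : (y - x).val = n - (x - y).val := by
      rw [hyx, ZMod.neg_val, if_neg hsub]
    rcases hor with h | h <;>
    · simp only [cyclicDist, Set.mem_union, Set.mem_singleton_iff, Set.mem_Icc, hyxval] at h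
      omega
  have hadj : ∀ i j : Fin 4, i ≠ j →
      (circ n ({m} ∪ Set.Icc (2 * m + 1) (3 * m))).Adj (f i) (f j) := by
    intro i j hij
    exact f.toHom.map_adj hij
  have h1 := key _ _ (hadj 1 0 (by decide))
  have h2 := key _ _ (hadj 2 1 (by decide))
  have h3 := key _ _ (hadj 3 2 (by decide))
  have h4 := key _ _ (hadj 2 0 (by decide))
  have h5 := key _ _ (hadj 3 1 (by decide))
  have h6 := key _ _ (hadj 3 0 (by decide))
  have e4 : (f 2 - f 0).val = ((f 2 - f 1).val + (f 1 - f 0).val) % n := by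
    rw [show f 2 - f 0 = (f 2 - f 1) + (f 1 - f 0) by ring, ZMod.val_add]
  have e5 : (f 3 - f 1).val = ((f 3 - f 2).val + (f 2 - f 1).val) % n := by
    rw [show f 3 - f 1 = (f 3 - f 2) + (f 2 - f 1) by ring, ZMod.val_add]
  have e6 : (f 3 - f 0).val = ((f 3 - f 2).val + (f 2 - f 1).val + (f 1 - f 0).val) % n := by
    rw [show f 3 - f 0 = (f 3 - f 2) + ((f 2 - f 1) + (f 1 - f 0)) by ring, ZMod.val_add,
      ZMod.val_add, Nat.add_mod_mod, ← Nat.add_assoc]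
  rw [e4] at h4
  rw [e5] at h5
  rw [e6] at h6
  have m4 := modred2 ((f 2 - f 1).val + (f 1 - f 0).val) n hn0 (by omega)
  have m5 := modred2 ((f 3 - f 2).val + (f 2 - f 1).val) n hn0 (by omega)
  have m6 := modred3 ((f 3 - f 2).val + (f 2 - f 1).val + (f 1 - f 0).val) n hn0 (by omega)
  omega
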